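/- Let H be a real inner product space, ν ∈ [0,1], α > 0, T a positive integer. Let f : H → ℝ be convex and differentiable with global minimizer x⋆, and let L : H → ℝ be positive with ‖∇f(x)‖ ≤ α^{ν/(1+ν)}·(L(x))^{1/(ν+1)}·(f(x) − f(x⋆))^{ν/(1+ν)} for all x ∈ H. Let x_1, …, x_T ∈ H with g_t = ∇f(x_t) ≠ 0 for all t, and suppose there is ψ⋆ ∈ ℝ with ∑_{t=1}^T ⟨g_t/‖g_t‖, x_t − x⋆⟩ ≤ ψ⋆. Define x̄_T = (∑_{t=1}^T 1/‖g_t‖)^{-1}·∑_{t=1}^T x_t/‖g_t‖. Then f(x̄_T) − f(x⋆) ≤ α^ν·(ψ⋆/T)^{1+ν}·(∏_{t=1}^T L(x_t))^{1/T} ≤ α^ν·(ψ⋆/T)^{1+ν}·(1/T)∑_{t=1}^T L(x_t). -/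

import Mathlib

open scoped RealInnerProductSpace

open Finset


/-- Gradient inequality for convex functions. -/
lemma convex_grad_ineq {H : Type*} [NormedAddCommGroup H] [InnerProductSpace ℝ H]
    {f : H → ℝ} (hconv : ConvexOn ℝ Set.univ f) {g a : H}
    (hd : HasFDerivAt f (innerSL ℝ g) a) (b : H) :
    f a + ⟪g, b - a⟫ ≤ f b := by
  have h1 : HasDerivAt (fun s : ℝ => a + s • (b - a)) (b - a) 0 := by
    simpa using ((hasDerivAt_id (0 : ℝ)).smul_const (b - a)).const_add a
  have h2 : HasDerivAt (fun s : ℝ => f (a + s • (b - a))) ⟪g, b - a⟫ 0 := by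
    have h0 : a = a + (0 : ℝ) • (b - a) := by simp
    rw [h0] at hd
    simpa [Function.comp_def] using hd.comp_hasDerivAt (x := (0 : ℝ)) h1
  have hφconv : ConvexOn ℝ Set.univ (fun s : ℝ => f (a + s • (b - a))) := by
    have h := hconv.comp_affineMap (AffineMap.lineMap a b : ℝ →ᵃ[ℝ] H)
    have : (fun s : ℝ => f (a + s • (b - a)))
        = f ∘ (AffineMap.lineMap a b : ℝ →ᵃ[ℝ] H) := by
      funext s
      simp only [Function.comp_apply, AffineMap.lineMap_apply_module']
      rw [add_comm]
    rw [this]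
    simpa using h
  have hs := hφconv.le_slope_of_hasDerivAt (Set.mem_univ (0:ℝ)) (Set.mem_univ (1:ℝ))
    zero_lt_one h2
  rw [slope_def_field] at hs
  simp at hs
  linarith

lemma core_holder (T : ℕ) (hT : 0 < T) (ν α : ℝ) (hν0 : 0 ≤ ν) (hα : 0 < α)
    (ε L g : ℕ → ℝ) (ψ D : ℝ)
    (hε : ∀ t ∈ Finset.Icc 1 T, 0 ≤ ε t)
    (hL : ∀ t ∈ Finset.Icc 1 T, 0 < L t)
    (hg : ∀ t ∈ Finset.Icc 1 T, 0 < g t)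
    (hgb : ∀ t ∈ Finset.Icc 1 T,
      g t ≤ α ^ (ν / (1 + ν)) * L t ^ (1 / (1 + ν)) * ε t ^ (ν / (1 + ν)))
    (hsum : ∑ t ∈ Finset.Icc 1 T, ε t * (g t)⁻¹ ≤ ψ)
    (hD0 : 0 ≤ D)
    (hDW : D * ∑ t ∈ Finset.Icc 1 T, (g t)⁻¹ ≤ ∑ t ∈ Finset.Icc 1 T, ε t * (g t)⁻¹) :
    D ≤ α ^ ν * (ψ / T) ^ (1 + ν) * (∏ t ∈ Finset.Icc 1 T, L t) ^ (1 / (T : ℝ))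
    ∧ α ^ ν * (ψ / T) ^ (1 + ν) * (∏ t ∈ Finset.Icc 1 T, L t) ^ (1 / (T : ℝ))
      ≤ α ^ ν * (ψ / T) ^ (1 + ν) * ((T : ℝ)⁻¹ * ∑ t ∈ Finset.Icc 1 T, L t) := by
  have h1ν : (0:ℝ) < 1 + ν := by linarith
  set s := Finset.Icc 1 T with hsdef
  have hcard : s.card = T := by simp [hsdef]
  have hTR : (0:ℝ) < (T:ℝ) := by exact_mod_cast hT
  set p : ℝ := 1/(1+ν) with hp
  set q : ℝ := ν/(1+ν) with hq
  have hppos : 0 < p := by rw [hp]; positivity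
  have hqnn : 0 ≤ q := by rw [hq]; positivity
  have hpq : ν * p = q := by rw [hp, hq]; ring
  have hpsum : p * (1+ν) = 1 := by rw [hp]; field_simp
  have hqsum : q * (1+ν) = ν := by rw [hq]; field_simp
  set u : ℝ := 1/(T:ℝ) with hu
  have hupos : 0 < u := by rw [hu]; positivity
  have hTu : (T:ℝ) * u = 1 := by rw [hu]; field_simp
  have hsumu : ∑ _t ∈ s, u = 1 := by
    rw [Finset.sum_const, nsmul_eq_mul, hcard, hTu]
  have hψ0 : 0 ≤ ψ :=
    le_trans (Finset.sum_nonneg fun t ht => mul_nonneg (hε t ht) (inv_nonneg.2 (hg t ht).le)) hsum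
  have hR0 : 0 ≤ ψ / (T:ℝ) := by positivity
  have hcase : ∀ t ∈ s, 0 < ε t ∨ (ε t = 0 ∧ ν = 0) := by
    intro t ht
    rcases (hε t ht).lt_or_eq with h|h
    · exact Or.inl h
    · refine Or.inr ⟨h.symm, ?_⟩
      by_contra hν
      have hq0 : q ≠ 0 := by
        rw [hq]; positivity
      have hb := hgb t ht
      rw [← h, Real.zero_rpow hq0, mul_zero] at hb
      exact absurd hb (not_le.2 (hg t ht))
  obtain ⟨M, hMval⟩ : ∃ F : ℕ → ℝ, ∀ t, F t = α ^ ν * L t * ε t ^ ν := ⟨_, fun _ => rfl⟩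
  have hMpos : ∀ t ∈ s, 0 < M t := by
    intro t ht
    rw [hMval]
    rcases hcase t ht with h|⟨h1,h2⟩
    · exact mul_pos (mul_pos (Real.rpow_pos_of_pos hα ν) (hL t ht)) (Real.rpow_pos_of_pos h ν)
    · rw [h1, h2, Real.rpow_zero, Real.rpow_zero]
      simpa using hL t ht
  have hgM : ∀ t ∈ s, g t ≤ M t ^ p := by
    intro t ht
    have hkey : M t ^ p = α ^ q * L t ^ p * ε t ^ q := by
      rw [hMval, Real.mul_rpow (mul_nonneg (Real.rpow_nonneg hα.le ν) (hL t ht).le) (Real.rpow_nonneg (hε t ht) ν),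
          Real.mul_rpow (by positivity) (hL t ht).le,
          ← Real.rpow_mul hα.le, ← Real.rpow_mul (hε t ht), hpq]
    rw [hkey]
    exact hgb t ht
  obtain ⟨a, haval⟩ : ∃ F : ℕ → ℝ, ∀ t, F t = (M t)⁻¹ ^ p := ⟨_, fun _ => rfl⟩
  have hapos : ∀ t ∈ s, 0 < a t := by
    intro t ht
    rw [haval]
    exact Real.rpow_pos_of_pos (inv_pos.2 (hMpos t ht)) p
  have haw : ∀ t ∈ s, a t ≤ (g t)⁻¹ := by
    intro t ht
    rw [haval, Real.inv_rpow (hMpos t ht).le]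
    exact inv_anti₀ (hg t ht) (hgM t ht)
  -- AM-GM on a
  have hAM1 : ∏ t ∈ s, a t ^ u ≤ u * ∑ t ∈ s, a t := by
    have := Real.geom_mean_le_arith_mean_weighted s (fun _ => u) a
      (fun i _ => hupos.le) hsumu (fun i hi => (hapos i hi).le)
    rwa [← Finset.mul_sum] at this
  -- AM-GM on a*ε
  have hAM2 : ∏ t ∈ s, (a t * ε t) ^ u ≤ u * ψ := by
    have h1 := Real.geom_mean_le_arith_mean_weighted s (fun _ => u) (fun t => a t * ε t)
      (fun i _ => hupos.le) hsumu (fun i hi => mul_nonneg (hapos i hi).le (hε i hi))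
    rw [← Finset.mul_sum] at h1
    refine h1.trans (mul_le_mul_of_nonneg_left ?_ hupos.le)
    refine le_trans (Finset.sum_le_sum fun t ht => ?_) hsum
    rw [mul_comm]
    exact mul_le_mul_of_nonneg_left (haw t ht) (hε t ht)
  have hPL : 0 < ∏ t ∈ s, L t := Finset.prod_pos hL
  have hPε : 0 ≤ ∏ t ∈ s, ε t := Finset.prod_nonneg hε
  have hApos : 0 < ∏ t ∈ s, a t ^ u :=
    Finset.prod_pos fun t ht => Real.rpow_pos_of_pos (hapos t ht) u
  have hGL : 0 < (∏ t ∈ s, L t) ^ u := Real.rpow_pos_of_pos hPL u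
  have hE0 : 0 ≤ (∏ t ∈ s, ε t) ^ u := Real.rpow_nonneg hPε u
  have hAinv : (∏ t ∈ s, a t ^ u)⁻¹
      = α ^ q * ((∏ t ∈ s, L t) ^ u) ^ p * ((((∏ t ∈ s, ε t) ^ u) ^ p) ^ ν) := by
    have h1 : (∏ t ∈ s, a t ^ u)⁻¹ = ∏ t ∈ s, M t ^ (p * u) := by
      rw [← Finset.prod_inv_distrib]
      refine Finset.prod_congr rfl fun t ht => ?_
      rw [haval, ← Real.rpow_mul (inv_nonneg.2 (hMpos t ht).le),
          Real.inv_rpow (hMpos t ht).le, inv_inv]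
    rw [h1]
    have h2 : ∀ t ∈ s, M t ^ (p * u)
        = (α ^ ν) ^ (p*u) * L t ^ (p*u) * (ε t ^ ν) ^ (p*u) := fun t ht => by
      rw [hMval, Real.mul_rpow (mul_nonneg (Real.rpow_nonneg hα.le ν) (hL t ht).le)
            (Real.rpow_nonneg (hε t ht) ν),
          Real.mul_rpow (Real.rpow_nonneg hα.le ν) (hL t ht).le]
    rw [Finset.prod_congr rfl h2, Finset.prod_mul_distrib, Finset.prod_mul_distrib]
    congr 1
    · congr 1
      · rw [Finset.prod_const, hcard, ← Real.rpow_natCast ((α^ν)^(p*u)) T,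
            ← Real.rpow_mul (Real.rpow_nonneg hα.le ν), ← Real.rpow_mul hα.le]
        have hexp : ν * (p*u*(T:ℝ)) = (ν*p) * ((T:ℝ)*u) := by ring
        rw [hexp, hTu, mul_one, hpq]
      · rw [Real.finset_prod_rpow s _ (fun t ht => (hL t ht).le),
            ← Real.rpow_mul hPL.le]
        congr 1
        ring
    · have h3 : ∀ t ∈ s, (ε t ^ ν) ^ (p*u) = ε t ^ (ν * (p*u)) := fun t ht =>
        (Real.rpow_mul (hε t ht) ν (p*u)).symm
      rw [Finset.prod_congr rfl h3, Real.finset_prod_rpow s _ (fun t ht => hε t ht),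
          ← Real.rpow_mul hPε, ← Real.rpow_mul hPε]
      congr 1
      ring
  set A := ∏ t ∈ s, a t ^ u with hAdef
  set E := (∏ t ∈ s, ε t) ^ u with hEdef
  set G := (∏ t ∈ s, L t) ^ u with hGdef
  set R := ψ / (T:ℝ) with hRdef
  have hAE : A * E ≤ R := by
    have hsplit : ∏ t ∈ s, (a t * ε t) ^ u = A * E := by
      rw [hAdef, hEdef, ← Real.finset_prod_rpow s ε (fun t ht => hε t ht) u,
        ← Finset.prod_mul_distrib]
      exact Finset.prod_congr rfl fun t ht => Real.mul_rpow (hapos t ht).le (hε t ht)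
    calc A * E = ∏ t ∈ s, (a t * ε t) ^ u := hsplit.symm
      _ ≤ u * ψ := hAM2
      _ = R := by rw [hu, hRdef]; ring
  have hCnn : (0:ℝ) ≤ R * (α ^ q * G ^ p) :=
    mul_nonneg hR0 (mul_nonneg (Real.rpow_nonneg hα.le q) (Real.rpow_nonneg hGL.le p))
  have hEp : E ^ p ≤ R * (α ^ q * G ^ p) := by
    rcases hE0.lt_or_eq with hEpos | hEeq
    · have h4 : E ≤ R * A⁻¹ := by
        have h4' := mul_le_mul_of_nonneg_left hAE (inv_nonneg.2 hApos.le)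
        rw [← mul_assoc, inv_mul_cancel₀ hApos.ne', one_mul] at h4'
        linarith [h4']
      rw [hAinv] at h4
      rw [← Real.rpow_mul hE0] at h4
      have hEC : E ≤ (R * (α ^ q * G ^ p)) * E ^ (p * ν) :=
        h4.trans_eq (by ring)
      have h5 : E ^ p = E * E ^ (-(p*ν)) := by
        nth_rewrite 2 [← Real.rpow_one E]
        rw [← Real.rpow_add hEpos]
        congr 1
        have h5' := hpsum
        ring_nf at h5' ⊢
        linarith
      have h6 : E ^ (p*ν) * E ^ (-(p*ν)) = 1 := by
        rw [← Real.rpow_add hEpos]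
        simp
      calc E ^ p = E * E ^ (-(p*ν)) := h5
        _ ≤ ((R * (α ^ q * G ^ p)) * E ^ (p * ν)) * E ^ (-(p*ν)) :=
            mul_le_mul_of_nonneg_right hEC (Real.rpow_nonneg hEpos.le _)
        _ = (R * (α ^ q * G ^ p)) * (E ^ (p*ν) * E ^ (-(p*ν))) := by ring
        _ = R * (α ^ q * G ^ p) := by rw [h6, mul_one]
    · rw [← hEeq, Real.zero_rpow hppos.ne']
      exact hCnn
  have hTA : (T:ℝ) * A ≤ ∑ t ∈ s, (g t)⁻¹ := by
    have h7 := mul_le_mul_of_nonneg_left hAM1 hTR.le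
    rw [← mul_assoc, hTu, one_mul] at h7
    exact h7.trans (Finset.sum_le_sum haw)
  have hDA : D ≤ R * A⁻¹ := by
    have h8 : D * ((T:ℝ) * A) ≤ ψ :=
      le_trans (mul_le_mul_of_nonneg_left hTA hD0) (hDW.trans hsum)
    have h9 : 0 < (T:ℝ) * A := mul_pos hTR hApos
    calc D ≤ ψ / ((T:ℝ) * A) := (le_div_iff₀ h9).2 h8
      _ = R * A⁻¹ := by rw [hRdef]; field_simp
  constructor
  · rw [hAinv] at hDA
    have h10 : (E ^ p) ^ ν ≤ (R * (α ^ q * G ^ p)) ^ ν :=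
      Real.rpow_le_rpow (Real.rpow_nonneg hE0 p) hEp hν0
    have h11 : D ≤ R * (α ^ q * G ^ p * (R * (α ^ q * G ^ p)) ^ ν) := by
      refine hDA.trans (mul_le_mul_of_nonneg_left ?_ hR0)
      exact mul_le_mul_of_nonneg_left h10
        (mul_nonneg (Real.rpow_nonneg hα.le q) (Real.rpow_nonneg hGL.le p))
    refine h11.trans_eq ?_
    have hne : (1:ℝ) + ν ≠ 0 := by positivity
    calc R * (α ^ q * G ^ p * (R * (α ^ q * G ^ p)) ^ ν)
        = (R * (α ^ q * G ^ p)) * (R * (α ^ q * G ^ p)) ^ ν := by ring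
      _ = (R * (α ^ q * G ^ p)) ^ ((1:ℝ) + ν) := by
          rw [Real.rpow_add' hCnn hne, Real.rpow_one]
      _ = R ^ ((1:ℝ) + ν) * ((α ^ q) ^ ((1:ℝ)+ν) * (G ^ p) ^ ((1:ℝ)+ν)) := by
          rw [Real.mul_rpow hR0 (mul_nonneg (Real.rpow_nonneg hα.le q)
              (Real.rpow_nonneg hGL.le p)),
            Real.mul_rpow (Real.rpow_nonneg hα.le q) (Real.rpow_nonneg hGL.le p)]
      _ = R ^ ((1:ℝ) + ν) * (α ^ ν * G) := by
          rw [← Real.rpow_mul hα.le, ← Real.rpow_mul hGL.le, hqsum, hpsum, Real.rpow_one]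
      _ = α ^ ν * R ^ (1 + ν) * G := by ring
  · refine mul_le_mul_of_nonneg_left ?_
      (mul_nonneg (Real.rpow_nonneg hα.le ν) (Real.rpow_nonneg hR0 (1+ν)))
    have h12 := Real.geom_mean_le_arith_mean_weighted s (fun _ => u) L
      (fun i _ => hupos.le) hsumu (fun i hi => (hL i hi).le)
    rw [← Finset.mul_sum] at h12
    calc G = ∏ t ∈ s, L t ^ u := by
          rw [hGdef, Real.finset_prod_rpow s L (fun t ht => (hL t ht).le) u]
      _ ≤ u * ∑ t ∈ s, L t := h12
      _ = (T:ℝ)⁻¹ * ∑ t ∈ s, L t := by rw [hu, one_div]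


/-- Main theorem: optimization with normalized gradients fed to an online linear optimization
algorithm with regret bound `ψ⋆` adapts to the local Hölder smoothness `L(·)`, with a bound
depending on the geometric mean of `L(x_t)`, itself bounded by the arithmetic mean. -/
theorem normalized_gradients_local_holder
    {H : Type*} [NormedAddCommGroup H] [InnerProductSpace ℝ H]
    (ν α : ℝ) (hν0 : 0 ≤ ν) (hν1 : ν ≤ 1) (hα : 0 < α)
    (T : ℕ) (hT : 0 < T)
    (f : H → ℝ) (f' : H → H)
    (hconv : ConvexOn ℝ Set.univ f)
    (hdiff : ∀ x, HasFDerivAt f (innerSL ℝ (f' x)) x)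
    (xstar : H) (hmin : ∀ x, f xstar ≤ f x)
    (L : H → ℝ) (hLpos : ∀ x, 0 < L x)
    (hgradbound : ∀ x : H, ‖f' x‖
      ≤ α ^ (ν / (1 + ν)) * (L x) ^ (1 / (ν + 1)) * (f x - f xstar) ^ (ν / (1 + ν)))
    (x : ℕ → H)
    (hgne : ∀ t ∈ Finset.Icc 1 T, f' (x t) ≠ 0)
    (ψ : ℝ)
    (hregret : ∑ t ∈ Finset.Icc 1 T, ⟪‖f' (x t)‖⁻¹ • f' (x t), x t - xstar⟫ ≤ ψ) :
    f ((∑ t ∈ Finset.Icc 1 T, ‖f' (x t)‖⁻¹)⁻¹ •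
        ∑ t ∈ Finset.Icc 1 T, ‖f' (x t)‖⁻¹ • x t) - f xstar
      ≤ α ^ ν * (ψ / T) ^ (1 + ν) * (∏ t ∈ Finset.Icc 1 T, L (x t)) ^ (1 / (T : ℝ))
    ∧ α ^ ν * (ψ / T) ^ (1 + ν) * (∏ t ∈ Finset.Icc 1 T, L (x t)) ^ (1 / (T : ℝ))
      ≤ α ^ ν * (ψ / T) ^ (1 + ν) * ((T : ℝ)⁻¹ * ∑ t ∈ Finset.Icc 1 T, L (x t)) := by
  have hs : (Finset.Icc 1 T).Nonempty := by
    rw [Finset.nonempty_Icc]; exact hT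
  have hg : ∀ t ∈ Finset.Icc 1 T, (0:ℝ) < ‖f' (x t)‖ :=
    fun t ht => norm_pos_iff.2 (hgne t ht)
  have hεin : ∀ t : ℕ, f (x t) - f xstar ≤ ⟪f' (x t), x t - xstar⟫ := by
    intro t
    have h := convex_grad_ineq hconv (hdiff (x t)) xstar
    have h2 : ⟪f' (x t), xstar - x t⟫ = -⟪f' (x t), x t - xstar⟫ := by
      rw [← inner_neg_right]
      congr 1
      abel
    rw [h2] at h
    linarith
  have hsum : ∑ t ∈ Finset.Icc 1 T, (f (x t) - f xstar) * ‖f' (x t)‖⁻¹ ≤ ψ := by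
    refine le_trans (Finset.sum_le_sum fun t ht => ?_) hregret
    rw [real_inner_smul_left, mul_comm]
    exact mul_le_mul_of_nonneg_left (hεin t) (inv_nonneg.2 (norm_nonneg _))
  have hW : 0 < ∑ t ∈ Finset.Icc 1 T, ‖f' (x t)‖⁻¹ :=
    Finset.sum_pos (fun t ht => inv_pos.2 (hg t ht)) hs
  set z : H := (∑ t ∈ Finset.Icc 1 T, ‖f' (x t)‖⁻¹)⁻¹ •
      ∑ t ∈ Finset.Icc 1 T, ‖f' (x t)‖⁻¹ • x t with hz
  have hJ : f z ≤ (∑ t ∈ Finset.Icc 1 T, ‖f' (x t)‖⁻¹)⁻¹ *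
      ∑ t ∈ Finset.Icc 1 T, ‖f' (x t)‖⁻¹ * f (x t) := by
    have h := hconv.map_centerMass_le (t := Finset.Icc 1 T)
      (w := fun t => ‖f' (x t)‖⁻¹) (p := x)
      (fun i _ => inv_nonneg.2 (norm_nonneg _)) hW (fun i _ => Set.mem_univ _)
    unfold Finset.centerMass at h
    rw [hz]
    simpa [smul_eq_mul, Function.comp] using h
  have hD0 : 0 ≤ f z - f xstar := sub_nonneg.2 (hmin _)
  have hDW : (f z - f xstar) * ∑ t ∈ Finset.Icc 1 T, ‖f' (x t)‖⁻¹
      ≤ ∑ t ∈ Finset.Icc 1 T, (f (x t) - f xstar) * ‖f' (x t)‖⁻¹ := by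
    have h1 : ∑ t ∈ Finset.Icc 1 T, (f (x t) - f xstar) * ‖f' (x t)‖⁻¹
        = (∑ t ∈ Finset.Icc 1 T, ‖f' (x t)‖⁻¹ * f (x t))
          - f xstar * ∑ t ∈ Finset.Icc 1 T, ‖f' (x t)‖⁻¹ := by
      rw [Finset.mul_sum, ← Finset.sum_sub_distrib]
      exact Finset.sum_congr rfl fun t ht => by ring
    rw [h1, sub_mul]
    have h2 : f z * ∑ t ∈ Finset.Icc 1 T, ‖f' (x t)‖⁻¹
        ≤ ∑ t ∈ Finset.Icc 1 T, ‖f' (x t)‖⁻¹ * f (x t) := by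
      have h3 := mul_le_mul_of_nonneg_left hJ hW.le
      rw [← mul_assoc, mul_inv_cancel₀ hW.ne', one_mul] at h3
      rw [mul_comm]
      exact h3
    exact sub_le_sub_right h2 _
  exact core_holder T hT ν α hν0 hα (fun t => f (x t) - f xstar)
    (fun t => L (x t)) (fun t => ‖f' (x t)‖) ψ (f z - f xstar)
    (fun t _ => sub_nonneg.2 (hmin _)) (fun t _ => hLpos _) hg
    (fun t _ => by
      have h := hgradbound (x t)
      rw [show (1:ℝ)/(ν+1) = 1/(1+ν) by rw [add_comm]] at h
      exact h) hsum hD0 hDW
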